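/- There exists a unique Borel probability measure m on (𝕍⁺, d_L) such that m is the law of the 𝕍⁺-valued random element ω ↦ (t ↦ L(ω)(t) + m_t(φ)), i.e. m = ℙ ∘ (L + m_·(φ))⁻¹, where for t ∈ (0,T) one sets m_t(φ) := ∫_{𝕍⁺} φ(v(t)) m(dv) and the sum is understood with the convention (−∞) + c = −∞ at t = 0 (note that t ↦ m_t(φ) is automatically nondecreasing, bounded and left-continuous, so that L(ω) + m_·(φ) again lies in 𝕍⁺). -/

import Mathlib

open MeasureTheory Filter Set Topology

noncomputable section

/-- Membership in the space `𝕍⁺` of nondecreasing, left-continuous functions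
`v : [0,T) → ℝ ∪ {−∞}` with `v 0 = −∞` and `v` real-valued on `(0,T)`
(encoded as functions `ℝ → WithBot ℝ`, normalized to `⊥` outside `(0,T)`;
left-continuity of a nondecreasing function is expressed in order-theoretic
terms: `v t` is the least upper bound of the values of `v` on `[0,t)`). -/
def InVPlus (T : ℝ) (v : ℝ → WithBot ℝ) : Prop :=
  (∀ t : ℝ, t ∉ Set.Ioo 0 T → v t = ⊥) ∧
  (∀ s t : ℝ, 0 ≤ s → s ≤ t → t < T → v s ≤ v t) ∧
  (∀ t : ℝ, t ∈ Set.Ioo 0 T → v t ≠ ⊥) ∧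
  (∀ t : ℝ, t ∈ Set.Ioo 0 T → IsLUB (v '' Set.Ico 0 t) (v t))

/-- The Lévy metric `d_L` on `𝕍⁺`. -/
noncomputable def dL (T : ℝ) (v₁ v₂ : ℝ → WithBot ℝ) : ℝ :=
  sInf {ε : ℝ | 0 ≤ ε ∧ ∀ t : ℝ, t ∈ Set.Ioo 0 T →
    (v₁ (max (t - ε) 0)).map (fun x => x - ε) ≤ v₂ t ∧
    (v₂ (max (t - ε) 0)).map (fun x => x - ε) ≤ v₁ t}

/-- The Polish space `(𝕍⁺, d_L)`, as a type. -/
structure VPlus (T : ℝ) where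
  toFun : ℝ → WithBot ℝ
  mem : InVPlus T toFun

/-- The metric topology of `d_L` on `𝕍⁺` (generated by the open balls). -/
instance (T : ℝ) : TopologicalSpace (VPlus T) :=
  TopologicalSpace.generateFrom
    {U : Set (VPlus T) | ∃ v : VPlus T, ∃ ε : ℝ, 0 < ε ∧
      U = {w : VPlus T | dL T v.toFun w.toFun < ε}}

/-- The Borel σ-algebra of `(𝕍⁺, d_L)`. -/
instance (T : ℝ) : MeasurableSpace (VPlus T) := borel (VPlus T)

namespace MFAux

instance (T : ℝ) : BorelSpace (VPlus T) := ⟨rfl⟩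

variable {T : ℝ}

/-- the defining set of `dL` -/
def SL (T : ℝ) (v₁ v₂ : ℝ → WithBot ℝ) : Set ℝ :=
  {ε : ℝ | 0 ≤ ε ∧ ∀ t : ℝ, t ∈ Set.Ioo 0 T →
    (v₁ (max (t - ε) 0)).map (fun x => x - ε) ≤ v₂ t ∧
    (v₂ (max (t - ε) 0)).map (fun x => x - ε) ≤ v₁ t}

lemma dL_eq (v₁ v₂ : ℝ → WithBot ℝ) : dL T v₁ v₂ = sInf (SL T v₁ v₂) := rfl

lemma _root_.VPlus.bot (v : VPlus T) {t : ℝ} (h : t ∉ Set.Ioo 0 T) : v.toFun t = ⊥ := v.mem.1 t h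

lemma _root_.VPlus.mono (v : VPlus T) {s t : ℝ} (h0 : 0 ≤ s) (hst : s ≤ t) (hT : t < T) :
    v.toFun s ≤ v.toFun t := v.mem.2.1 s t h0 hst hT

lemma _root_.VPlus.ne_bot (v : VPlus T) {t : ℝ} (h : t ∈ Set.Ioo 0 T) : v.toFun t ≠ ⊥ := v.mem.2.2.1 t h

lemma _root_.VPlus.lub (v : VPlus T) {t : ℝ} (h : t ∈ Set.Ioo 0 T) :
    IsLUB (v.toFun '' Set.Ico 0 t) (v.toFun t) := v.mem.2.2.2 t h

lemma maxT_mem_SL (v w : VPlus T) : max T 0 ∈ SL T v.toFun w.toFun := by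
  refine ⟨le_max_right _ _, fun t ht => ?_⟩
  have h0 : max (t - max T 0) 0 = 0 := by
    have : t - max T 0 ≤ 0 := by
      have := ht.2; have := le_max_left T 0; linarith
    simp [max_eq_right this]
  have hv : v.toFun 0 = ⊥ := v.bot (by simp)
  have hw : w.toFun 0 = ⊥ := w.bot (by simp)
  rw [h0, hv, hw]
  simp

lemma SL_nonempty (v w : VPlus T) : (SL T v.toFun w.toFun).Nonempty := ⟨_, maxT_mem_SL v w⟩

lemma SL_bddBelow (v w : ℝ → WithBot ℝ) : BddBelow (SL T v w) := ⟨0, fun _ h => h.1⟩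

lemma dL_nonneg (v w : VPlus T) : 0 ≤ dL T v.toFun w.toFun :=
  le_csInf (SL_nonempty v w) fun _ h => h.1

lemma SL_symm {v w : ℝ → WithBot ℝ} {ε : ℝ} (h : ε ∈ SL T v w) : ε ∈ SL T w v :=
  ⟨h.1, fun t ht => ⟨(h.2 t ht).2, (h.2 t ht).1⟩⟩

lemma zero_mem_SL_self (v : VPlus T) : 0 ∈ SL T v.toFun v.toFun := by
  refine ⟨le_refl _, fun t ht => ?_⟩
  have : max (t - 0) 0 = t := by rw [sub_zero]; exact max_eq_left ht.1.le
  rw [this]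
  constructor <;>
  · cases h : v.toFun t with
    | bot => simp
    | coe x => simp

lemma dL_self (v : VPlus T) : dL T v.toFun v.toFun = 0 :=
  le_antisymm (csInf_le (SL_bddBelow _ _) (zero_mem_SL_self v)) (dL_nonneg v v)

lemma exists_mem_SL_lt {v w : VPlus T} {ε : ℝ} (h : dL T v.toFun w.toFun < ε) :
    ∃ ε' ∈ SL T v.toFun w.toFun, ε' < ε :=
  exists_lt_of_csInf_lt (SL_nonempty v w) h


/-- one-sided Lévy condition -/
def Cond (T : ℝ) (v w : ℝ → WithBot ℝ) (ε : ℝ) : Prop :=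
  ∀ t : ℝ, t ∈ Set.Ioo 0 T → (v (max (t - ε) 0)).map (fun x => x - ε) ≤ w t

lemma mem_SL_iff {v w : ℝ → WithBot ℝ} {ε : ℝ} :
    ε ∈ SL T v w ↔ 0 ≤ ε ∧ Cond T v w ε ∧ Cond T w v ε := by
  constructor
  · exact fun h => ⟨h.1, fun t ht => (h.2 t ht).1, fun t ht => (h.2 t ht).2⟩
  · exact fun h => ⟨h.1, fun t ht => ⟨h.2.1 t ht, h.2.2 t ht⟩⟩

lemma cond_trans {v u w : VPlus T} {ε₁ ε₂ : ℝ} (h1 : Cond T v.toFun u.toFun ε₁)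
    (h2 : Cond T u.toFun w.toFun ε₂) (he1 : 0 ≤ ε₁) (he2 : 0 ≤ ε₂) :
    Cond T v.toFun w.toFun (ε₁ + ε₂) := by
  intro t ht
  rcases eq_or_ne (v.toFun (max (t - (ε₁ + ε₂)) 0)) ⊥ with hb | hb
  · rw [hb]; simp
  -- v at the shifted point is a real number
  obtain ⟨y, hy⟩ : ∃ y : ℝ, v.toFun (max (t - (ε₁ + ε₂)) 0) = (y : WithBot ℝ) := by
    cases h : v.toFun (max (t - (ε₁ + ε₂)) 0) with
    | bot => exact absurd h hb
    | coe y => exact ⟨y, rfl⟩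
  -- the shifted point is in (0, T)
  have hmem : max (t - (ε₁ + ε₂)) 0 ∈ Set.Ioo 0 T := by
    by_contra hmem
    exact hb (v.bot hmem)
  have htpos : 0 < t - (ε₁ + ε₂) := by
    rcases lt_or_ge 0 (t - (ε₁ + ε₂)) with h | h
    · exact h
    · rw [max_eq_right h] at hmem; exact absurd hmem.1 (lt_irrefl 0)
  have hmax : max (t - (ε₁ + ε₂)) 0 = t - (ε₁ + ε₂) := max_eq_left htpos.le
  -- intermediate point
  have ht'mem : t - ε₂ ∈ Set.Ioo 0 T := by
    constructor
    · linarith [htpos, he1]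
    · linarith [ht.2]
  have hmax1 : max (t - ε₂ - ε₁) 0 = t - (ε₁ + ε₂) := by
    rw [max_eq_left (by linarith)]; ring
  have h1' := h1 (t - ε₂) ht'mem
  rw [hmax1, ← hmax, hy] at h1'
  simp only [WithBot.map_coe] at h1'
  obtain ⟨z, hz⟩ : ∃ z : ℝ, u.toFun (t - ε₂) = (z : WithBot ℝ) := by
    cases h : u.toFun (t - ε₂) with
    | bot => rw [h] at h1'; exact absurd h1' (by simp)
    | coe z => exact ⟨z, rfl⟩
  rw [hz, WithBot.coe_le_coe] at h1'
  have h2' := h2 t ht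
  have hmax2 : max (t - ε₂) 0 = t - ε₂ := max_eq_left (by linarith)
  rw [hmax2, hz, WithBot.map_coe] at h2'
  rw [hy, WithBot.map_coe]
  calc ((y - (ε₁ + ε₂) : ℝ) : WithBot ℝ) ≤ ((z - ε₂ : ℝ) : WithBot ℝ) := by
        rw [WithBot.coe_le_coe]; linarith
    _ ≤ w.toFun t := h2'

lemma dL_triangle (v u w : VPlus T) :
    dL T v.toFun w.toFun ≤ dL T v.toFun u.toFun + dL T u.toFun w.toFun := by
  have key : ∀ ε₁ ∈ SL T v.toFun u.toFun, ∀ ε₂ ∈ SL T u.toFun w.toFun,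
      dL T v.toFun w.toFun ≤ ε₁ + ε₂ := by
    intro ε₁ h1 ε₂ h2
    rw [mem_SL_iff] at h1 h2
    refine csInf_le (SL_bddBelow _ _) (show _ ∈ SL T v.toFun w.toFun from ?_)
    rw [mem_SL_iff]
    exact ⟨by linarith [h1.1, h2.1], cond_trans h1.2.1 h2.2.1 h1.1 h2.1,
      by rw [add_comm]; exact cond_trans h2.2.2 h1.2.2 h2.1 h1.1⟩
  have step1 : ∀ ε₂ ∈ SL T u.toFun w.toFun,
      dL T v.toFun w.toFun - ε₂ ≤ dL T v.toFun u.toFun := by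
    intro ε₂ h2
    refine le_csInf (SL_nonempty v u) fun ε₁ h1 => ?_
    linarith [key ε₁ h1 ε₂ h2]
  have step2 : dL T v.toFun w.toFun - dL T v.toFun u.toFun ≤ dL T u.toFun w.toFun := by
    refine le_csInf (SL_nonempty u w) fun ε₂ h2 => ?_
    linarith [step1 ε₂ h2]
  linarith


lemma coe_eval (v : VPlus T) {t : ℝ} (ht : t ∈ Set.Ioo 0 T) :
    v.toFun t = ((WithBot.unbotD 0 (v.toFun t) : ℝ) : WithBot ℝ) := by
  cases h : v.toFun t with
  | bot => exact absurd h (v.ne_bot ht)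
  | coe x => simp

lemma exists_lt_near (v : VPlus T) {t : ℝ} (ht : t ∈ Set.Ioo 0 T) {b : WithBot ℝ}
    (hb : b < v.toFun t) : ∃ s, s ∈ Set.Ioo 0 t ∧ b < v.toFun s := by
  by_contra h
  push_neg at h
  have hub : b ∈ upperBounds (v.toFun '' Set.Ico 0 t) := by
    rintro x ⟨s, hs, rfl⟩
    rcases eq_or_lt_of_le hs.1 with h0 | h0
    · rw [v.bot (by simp [← h0])]; exact bot_le
    · exact h s ⟨h0, hs.2⟩
  exact absurd ((v.lub ht).2 hub) (not_le_of_gt hb)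

lemma isOpen_ball (v : VPlus T) {ε : ℝ} (hε : 0 < ε) :
    IsOpen {w : VPlus T | dL T v.toFun w.toFun < ε} :=
  TopologicalSpace.isOpen_generateFrom_of_mem ⟨v, ε, hε, rfl⟩

lemma mem_ball_self (v : VPlus T) {ε : ℝ} (hε : 0 < ε) :
    v ∈ {w : VPlus T | dL T v.toFun w.toFun < ε} := by
  simp only [Set.mem_setOf_eq, dL_self]; exact hε

lemma isOpen_eval_gt {t a : ℝ} (ht : t ∈ Set.Ioo 0 T) :
    IsOpen {v : VPlus T | (a : WithBot ℝ) < v.toFun t} := by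
  rw [isOpen_iff_forall_mem_open]
  intro v hv
  simp only [Set.mem_setOf_eq] at hv
  set x : ℝ := WithBot.unbotD 0 (v.toFun t) with hx
  have hvt : v.toFun t = (x : WithBot ℝ) := coe_eval v ht
  have hax : a < x := by rwa [hvt, WithBot.coe_lt_coe] at hv
  set δ : ℝ := (x - a) / 2 with hδ
  have hδpos : 0 < δ := by simp only [hδ]; linarith
  obtain ⟨s, hs, hbs⟩ := exists_lt_near v ht (show ((x - δ : ℝ) : WithBot ℝ) < v.toFun t by
    rw [hvt, WithBot.coe_lt_coe]; linarith)
  set ε : ℝ := min (t - s) δ with hε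
  have hεpos : 0 < ε := lt_min (by linarith [hs.2]) hδpos
  refine ⟨{w : VPlus T | dL T v.toFun w.toFun < ε}, ?_, isOpen_ball v hεpos, mem_ball_self v hεpos⟩
  intro w hw
  simp only [Set.mem_setOf_eq] at hw ⊢
  obtain ⟨ε', hε', hε'lt⟩ := exists_mem_SL_lt hw
  have hε'0 : 0 ≤ ε' := hε'.1
  have hcond := (hε'.2 t ht).1
  have hu : max (t - ε') 0 = t - ε' := max_eq_left (by
    have : ε ≤ t - s := min_le_left _ _; linarith [hs.1])
  have hsu : s ≤ t - ε' := by
    have : ε ≤ t - s := min_le_left _ _; linarith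
  have humem : t - ε' ∈ Set.Ioo 0 T := ⟨by linarith [hs.1], by linarith [ht.2]⟩
  have hmono : v.toFun s ≤ v.toFun (t - ε') := v.mono hs.1.le hsu humem.2
  obtain ⟨y, hy⟩ : ∃ y : ℝ, v.toFun (t - ε') = (y : WithBot ℝ) := by
    cases h : v.toFun (t - ε') with
    | bot => exact absurd h (v.ne_bot humem)
    | coe y => exact ⟨y, rfl⟩
  have hylt : ((x - δ : ℝ) : WithBot ℝ) < (y : WithBot ℝ) := lt_of_lt_of_le hbs (hy ▸ hmono)
  rw [WithBot.coe_lt_coe] at hylt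
  rw [hu, hy, WithBot.map_coe] at hcond
  calc (a : WithBot ℝ) < ((y - ε' : ℝ) : WithBot ℝ) := by
        rw [WithBot.coe_lt_coe]
        have hεδ : ε ≤ δ := min_le_right _ _
        have : a = x - 2 * δ := by simp only [hδ]; ring
        linarith
    _ ≤ w.toFun t := hcond

lemma measurable_eval (t : ℝ) :
    Measurable (fun v : VPlus T => WithBot.unbotD 0 (v.toFun t)) := by
  by_cases ht : t ∈ Set.Ioo 0 T
  · apply measurable_of_Ioi
    intro a
    have heq : (fun v : VPlus T => WithBot.unbotD 0 (v.toFun t)) ⁻¹' Set.Ioi a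
        = {v : VPlus T | (a : WithBot ℝ) < v.toFun t} := by
      ext v
      simp only [Set.mem_preimage, Set.mem_Ioi, Set.mem_setOf_eq]
      rw [coe_eval v ht, WithBot.coe_lt_coe]
      simp
    rw [heq]
    exact (isOpen_eval_gt ht).measurableSet
  · have heq : (fun v : VPlus T => WithBot.unbotD 0 (v.toFun t)) = fun _ => (0 : ℝ) := by
      funext v; rw [v.bot ht]; rfl
    rw [heq]
    exact measurable_const


section Shift

variable (G : ℝ → ℝ)
variable (hGmono : ∀ ⦃s t : ℝ⦄, s ∈ Set.Ioo 0 T → t ∈ Set.Ioo 0 T → s ≤ t → G s ≤ G t)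
variable (hGlub : ∀ t ∈ Set.Ioo 0 T, IsLUB (G '' Set.Ioo 0 t) (G t))

/-- adding a deterministic shift to a `VPlus` function -/
def shiftFun (v : VPlus T) : ℝ → WithBot ℝ := fun t => v.toFun t + ((G t : ℝ) : WithBot ℝ)

include hGmono hGlub in
lemma shift_inVPlus (v : VPlus T) : InVPlus T (shiftFun G v) := by
  refine ⟨fun t ht => ?_, fun s t h0 hst hT' => ?_, fun t ht => ?_, fun t ht => ?_⟩
  · simp only [shiftFun, v.bot ht, WithBot.bot_add]
  · by_cases hs : s ∈ Set.Ioo 0 T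
    · have ht' : t ∈ Set.Ioo 0 T := ⟨lt_of_lt_of_le hs.1 hst, hT'⟩
      simp only [shiftFun]
      rw [coe_eval v hs, coe_eval v ht', ← WithBot.coe_add, ← WithBot.coe_add,
        WithBot.coe_le_coe]
      have h1 : v.toFun s ≤ v.toFun t := v.mono h0 hst hT'
      rw [coe_eval v hs, coe_eval v ht', WithBot.coe_le_coe] at h1
      have h2 : G s ≤ G t := hGmono hs ht' hst
      linarith
    · simp only [shiftFun, v.bot hs, WithBot.bot_add]
      exact bot_le
  · simp only [shiftFun]
    rw [coe_eval v ht, ← WithBot.coe_add]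
    exact WithBot.coe_ne_bot
  · constructor
    · rintro x ⟨s, hs, rfl⟩
      by_cases hsI : s ∈ Set.Ioo 0 T
      · simp only [shiftFun]
        rw [coe_eval v hsI, coe_eval v ht, ← WithBot.coe_add, ← WithBot.coe_add,
          WithBot.coe_le_coe]
        have h1 : v.toFun s ≤ v.toFun t := v.mono hs.1 hs.2.le ht.2
        rw [coe_eval v hsI, coe_eval v ht, WithBot.coe_le_coe] at h1
        have h2 : G s ≤ G t := hGmono hsI ht hs.2.le
        linarith
      · simp only [shiftFun, v.bot hsI, WithBot.bot_add]
        exact bot_le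
    · intro b hb
      -- b is an upper bound of the image
      set x : ℝ := WithBot.unbotD 0 (v.toFun t) with hx
      have hvt : v.toFun t = (x : WithBot ℝ) := coe_eval v ht
      -- value at t/2 shows b is not ⊥
      have ht2 : t / 2 ∈ Set.Ioo 0 T := ⟨by linarith [ht.1], by linarith [ht.1, ht.2]⟩
      have ht2' : t / 2 ∈ Set.Ico 0 t := ⟨by linarith [ht.1], by linarith [ht.1]⟩
      have hbge : shiftFun G v (t / 2) ≤ b := hb ⟨t / 2, ht2', rfl⟩
      have hne : shiftFun G v (t / 2) ≠ ⊥ := by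
        simp only [shiftFun]
        rw [coe_eval v ht2, ← WithBot.coe_add]
        exact WithBot.coe_ne_bot
      obtain ⟨z, hz⟩ : ∃ z : ℝ, b = (z : WithBot ℝ) := by
        cases hbb : b with
        | bot => rw [hbb] at hbge; exact absurd (le_bot_iff.mp hbge) hne
        | coe z => exact ⟨z, rfl⟩
      simp only [shiftFun]
      rw [hvt, ← WithBot.coe_add, hz, WithBot.coe_le_coe]
      by_contra hlt
      push_neg at hlt
      set δ : ℝ := (x + G t - z) / 3 with hδ
      have hδpos : 0 < δ := by simp only [hδ]; linarith
      obtain ⟨s₁, hs₁, hbs₁⟩ := exists_lt_near v ht (show ((x - δ : ℝ) : WithBot ℝ) < v.toFun t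
        by rw [hvt, WithBot.coe_lt_coe]; linarith)
      obtain ⟨gs, ⟨s₂, hs₂, rfl⟩, hgs, -⟩ := (hGlub t ht).exists_between
        (show G t - δ < G t by linarith)
      set s : ℝ := max s₁ s₂ with hs
      have hsIoo : s ∈ Set.Ioo 0 t := ⟨lt_of_lt_of_le hs₁.1 (le_max_left _ _),
        max_lt hs₁.2 hs₂.2⟩
      have hsT : s ∈ Set.Ioo 0 T := ⟨hsIoo.1, lt_trans hsIoo.2 ht.2⟩
      have hble : shiftFun G v s ≤ b := hb ⟨s, ⟨hsIoo.1.le, hsIoo.2⟩, rfl⟩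
      set ys : ℝ := WithBot.unbotD 0 (v.toFun s) with hys
      have hvs : v.toFun s = (ys : WithBot ℝ) := coe_eval v hsT
      have hys_lt : x - δ < ys := by
        have h1 : v.toFun s₁ ≤ v.toFun s := v.mono hs₁.1.le (le_max_left _ _) hsT.2
        have := lt_of_lt_of_le hbs₁ h1
        rwa [hvs, WithBot.coe_lt_coe] at this
      have hgs_le : G s₂ ≤ G s := hGmono ⟨hs₂.1, lt_trans hs₂.2 ht.2⟩ hsT (le_max_right _ _)
      have hzge : ys + G s ≤ z := by
        have : shiftFun G v s = ((ys + G s : ℝ) : WithBot ℝ) := by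
          simp only [shiftFun]; rw [hvs, ← WithBot.coe_add]
        rw [this, hz, WithBot.coe_le_coe] at hble
        exact hble
      have h3 : 3 * δ = x + G t - z := by rw [hδ]; ring
      linarith

/-- the shift operator on `VPlus` -/
def shiftV (v : VPlus T) : VPlus T := ⟨shiftFun G v, shift_inVPlus G hGmono hGlub v⟩

include hGmono in
lemma cond_shift {v w : VPlus T} {ε : ℝ} (hε : 0 ≤ ε) (h : Cond T v.toFun w.toFun ε) :
    Cond T (shiftFun G v) (shiftFun G w) ε := by
  intro t ht
  rcases eq_or_ne (v.toFun (max (t - ε) 0)) ⊥ with hbot | hbot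
  · simp only [shiftFun, hbot, WithBot.bot_add]; simp
  · have humem : max (t - ε) 0 ∈ Set.Ioo 0 T := by
      by_contra hmem; exact hbot (v.bot hmem)
    have hut : max (t - ε) 0 ≤ t := by
      rcases max_cases (t - ε) 0 with ⟨h1, _⟩ | ⟨h1, _⟩
      · rw [h1]; linarith
      · rw [h1]; exact ht.1.le
    obtain ⟨y, hy⟩ : ∃ y : ℝ, v.toFun (max (t - ε) 0) = (y : WithBot ℝ) := by
      cases hc : v.toFun (max (t - ε) 0) with
      | bot => exact absurd hc hbot
      | coe y => exact ⟨y, rfl⟩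
    have hcond := h t ht
    rw [hy, WithBot.map_coe] at hcond
    obtain ⟨z, hz⟩ : ∃ z : ℝ, w.toFun t = (z : WithBot ℝ) := by
      cases hc : w.toFun t with
      | bot => exact absurd hc (w.ne_bot ht)
      | coe z => exact ⟨z, rfl⟩
    rw [hz, WithBot.coe_le_coe] at hcond
    have hG : G (max (t - ε) 0) ≤ G t := hGmono humem ht hut
    simp only [shiftFun]
    rw [hy, hz, ← WithBot.coe_add, ← WithBot.coe_add, WithBot.map_coe, WithBot.coe_le_coe]
    linarith

include hGmono in
lemma SL_shiftV {v w : VPlus T} {ε : ℝ} (h : ε ∈ SL T v.toFun w.toFun) :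
    ε ∈ SL T (shiftFun G v) (shiftFun G w) := by
  rw [mem_SL_iff] at h ⊢
  exact ⟨h.1, cond_shift G hGmono h.1 h.2.1, cond_shift G hGmono h.1 h.2.2⟩

include hGmono hGlub in
lemma dL_shiftV_le (v w : VPlus T) :
    dL T (shiftV G hGmono hGlub v).toFun (shiftV G hGmono hGlub w).toFun
      ≤ dL T v.toFun w.toFun :=
  csInf_le_csInf (SL_bddBelow _ _) (SL_nonempty v w) fun _ h => SL_shiftV G hGmono h

include hGmono hGlub in
lemma continuous_shiftV : Continuous (shiftV G hGmono hGlub) := by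
  rw [show (instTopologicalSpaceVPlus T) = TopologicalSpace.generateFrom
      {U : Set (VPlus T) | ∃ v : VPlus T, ∃ ε : ℝ, 0 < ε ∧
        U = {w : VPlus T | dL T v.toFun w.toFun < ε}} from rfl,
    continuous_generateFrom_iff]
  rintro U ⟨u, ε, hε, rfl⟩
  rw [isOpen_iff_forall_mem_open]
  intro v₀ hv₀
  simp only [Set.mem_preimage, Set.mem_setOf_eq] at hv₀
  set δ : ℝ := ε - dL T u.toFun (shiftV G hGmono hGlub v₀).toFun with hδ
  have hδpos : 0 < δ := by simp only [hδ]; linarith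
  refine ⟨{w : VPlus T | dL T v₀.toFun w.toFun < δ}, ?_, isOpen_ball v₀ hδpos,
    mem_ball_self v₀ hδpos⟩
  intro v hv
  simp only [Set.mem_setOf_eq] at hv
  simp only [Set.mem_preimage, Set.mem_setOf_eq]
  calc dL T u.toFun (shiftV G hGmono hGlub v).toFun
      ≤ dL T u.toFun (shiftV G hGmono hGlub v₀).toFun
        + dL T (shiftV G hGmono hGlub v₀).toFun (shiftV G hGmono hGlub v).toFun :=
        dL_triangle u _ _
    _ ≤ dL T u.toFun (shiftV G hGmono hGlub v₀).toFun + dL T v₀.toFun v.toFun := by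
        linarith [dL_shiftV_le G hGmono hGlub v₀ v]
    _ < ε := by linarith

include hGmono hGlub in
lemma measurable_shiftV : Measurable (shiftV G hGmono hGlub) :=
  (continuous_shiftV G hGmono hGlub).measurable

end Shift

section Fix
set_option linter.unusedSectionVars false

variable {Ω : Type*} [MeasurableSpace Ω] (P : Measure Ω) [IsProbabilityMeasure P]
variable (L : Ω → VPlus T) (φ : ℝ → ℝ)

/-- evaluation of the driving noise -/
def ψ (t : ℝ) (ω : Ω) : ℝ := WithBot.unbotD 0 ((L ω).toFun t)

/-- the one-dimensional fixed point map -/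
def FF (t c : ℝ) : ℝ := ∫ ω, φ (ψ L t ω + c) ∂P

variable (hL : Measurable L) (hφ_diff : Differentiable ℝ φ)
  (hφ_deriv : ∀ x : ℝ, deriv φ x ∈ Set.Ico (0 : ℝ) 1)
  {C : ℝ} (hC : ∀ x : ℝ, |φ x| ≤ C)

include hφ_diff hφ_deriv in
lemma philip : ∀ a b : ℝ, |φ a - φ b| ≤ |a - b| := by
  have hl : LipschitzWith 1 φ := by
    apply lipschitzWith_of_nnnorm_deriv_le hφ_diff
    intro x
    rw [← NNReal.coe_le_coe, coe_nnnorm, Real.norm_eq_abs, NNReal.coe_one, abs_le]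
    exact ⟨by linarith [(hφ_deriv x).1], (hφ_deriv x).2.le⟩
  intro a b
  have := hl.dist_le_mul a b
  rw [Real.dist_eq, Real.dist_eq] at this
  simpa using this

include hφ_diff hφ_deriv in
lemma phimono : Monotone φ :=
  monotone_of_deriv_nonneg hφ_diff fun x => (hφ_deriv x).1

include hφ_diff hφ_deriv in
lemma phishrink : ∀ a b : ℝ, a < b → φ b - φ a < b - a := by
  intro a b hab
  obtain ⟨c, _, hc⟩ := exists_deriv_eq_slope φ hab hφ_diff.continuous.continuousOn
    hφ_diff.differentiableOn
  have h1 : deriv φ c < 1 := (hφ_deriv c).2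
  rw [hc] at h1
  have := (div_lt_one (by linarith : (0:ℝ) < b - a)).mp h1
  linarith

include hL hφ_diff hC in
lemma integrable_integrand (t c : ℝ) : Integrable (fun ω => φ (ψ L t ω + c)) P := by
  have hm : Measurable (fun ω => φ (ψ L t ω + c)) :=
    hφ_diff.continuous.measurable.comp (((measurable_eval t).comp hL).add_const c)
  exact (integrable_const C).mono' hm.aestronglyMeasurable
    (Filter.Eventually.of_forall fun ω => by rw [Real.norm_eq_abs]; exact hC _)

include hL hφ_diff hC in
lemma FF_bound (t c : ℝ) : |FF P L φ t c| ≤ C := by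
  have := norm_integral_le_of_norm_le_const
    (μ := P) (C := C) (f := fun ω => φ (ψ L t ω + c))
    (Filter.Eventually.of_forall fun ω => by rw [Real.norm_eq_abs]; exact hC _)
  simpa [FF, Real.norm_eq_abs] using this

include hL hφ_diff hφ_deriv hC in
lemma FF_lip (t c c' : ℝ) : |FF P L φ t c - FF P L φ t c'| ≤ |c - c'| := by
  have h1 : FF P L φ t c - FF P L φ t c'
      = ∫ ω, (φ (ψ L t ω + c) - φ (ψ L t ω + c')) ∂P := by
    rw [integral_sub (integrable_integrand P L φ hL hφ_diff hC t c)
      (integrable_integrand P L φ hL hφ_diff hC t c')]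
    rfl
  rw [h1, ← Real.norm_eq_abs]
  have := norm_integral_le_of_norm_le_const
    (μ := P) (C := |c - c'|) (f := fun ω => φ (ψ L t ω + c) - φ (ψ L t ω + c'))
    (Filter.Eventually.of_forall fun ω => by
      rw [Real.norm_eq_abs]
      have := philip φ hφ_diff hφ_deriv (ψ L t ω + c) (ψ L t ω + c')
      simpa using this)
  simpa using this

include hL hφ_diff hφ_deriv hC in
lemma FF_mono_c (t : ℝ) {c c' : ℝ} (h : c ≤ c') : FF P L φ t c ≤ FF P L φ t c' :=
  integral_mono (integrable_integrand P L φ hL hφ_diff hC t c)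
    (integrable_integrand P L φ hL hφ_diff hC t c')
    (fun ω => phimono φ hφ_diff hφ_deriv (by linarith))

include hL hφ_diff hφ_deriv hC in
lemma FF_mono_t {s t : ℝ} (hs : s ∈ Set.Ioo 0 T) (ht : t ∈ Set.Ioo 0 T) (hst : s ≤ t)
    (c : ℝ) : FF P L φ s c ≤ FF P L φ t c := by
  refine integral_mono (integrable_integrand P L φ hL hφ_diff hC s c)
    (integrable_integrand P L φ hL hφ_diff hC t c) (fun ω => ?_)
  have h1 : (L ω).toFun s ≤ (L ω).toFun t := (L ω).mono hs.1.le hst ht.2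
  rw [coe_eval (L ω) hs, coe_eval (L ω) ht, WithBot.coe_le_coe] at h1
  exact phimono φ hφ_diff hφ_deriv (by simp only [ψ]; linarith)

include hL hφ_diff hφ_deriv hC in
lemma FF_shrink (t : ℝ) {c c' : ℝ} (h : c' < c) :
    FF P L φ t c - FF P L φ t c' < c - c' := by
  by_contra hcon
  push_neg at hcon
  set g : Ω → ℝ := fun ω => (c - c') - (φ (ψ L t ω + c) - φ (ψ L t ω + c')) with hg
  have hgpos : ∀ ω, 0 < g ω := fun ω => by
    have := phishrink φ hφ_diff hφ_deriv (ψ L t ω + c') (ψ L t ω + c) (by linarith)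
    simp only [hg]
    have h2 : (ψ L t ω + c) - (ψ L t ω + c') = c - c' := by ring
    rw [h2] at this
    linarith
  have hgint : Integrable g P :=
    (integrable_const (c - c')).sub
      ((integrable_integrand P L φ hL hφ_diff hC t c).sub
        (integrable_integrand P L φ hL hφ_diff hC t c'))
  have h1 := integrable_integrand P L φ hL hφ_diff hC t c
  have h2 := integrable_integrand P L φ hL hφ_diff hC t c'
  have h12 : Integrable (fun ω => φ (ψ L t ω + c) - φ (ψ L t ω + c')) P := h1.sub h2
  have hgval : ∫ ω, g ω ∂P = (c - c') - (FF P L φ t c - FF P L φ t c') := by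
    have e1 : ∫ ω, g ω ∂P
        = ∫ ω, ((c - c') - (φ (ψ L t ω + c) - φ (ψ L t ω + c'))) ∂P := rfl
    rw [e1, integral_sub (integrable_const _) h12, integral_sub h1 h2, integral_const]
    simp [FF]
  have hle : ∫ ω, g ω ∂P ≤ 0 := by rw [hgval]; linarith
  have hge : 0 ≤ ∫ ω, g ω ∂P := integral_nonneg fun ω => (hgpos ω).le
  have hzero : ∫ ω, g ω ∂P = 0 := le_antisymm hle hge
  have hae : g =ᵐ[P] 0 :=
    (integral_eq_zero_iff_of_nonneg (fun ω => (hgpos ω).le) hgint).mp hzero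
  have hfalse : ∀ᵐ ω ∂P, False := hae.mono fun ω hω => by
    exact absurd hω (ne_of_gt (hgpos ω))
  rw [ae_iff] at hfalse
  simp [measure_univ] at hfalse


include hL hφ_diff hφ_deriv hC in
lemma FF_continuous (t : ℝ) : Continuous (fun c => FF P L φ t c) := by
  have : LipschitzWith 1 (fun c => FF P L φ t c) := by
    apply LipschitzWith.of_dist_le_mul
    intro c c'
    rw [Real.dist_eq, Real.dist_eq, NNReal.coe_one, one_mul]
    exact FF_lip P L φ hL hφ_diff hφ_deriv hC t c c'
  exact this.continuous

include hL hφ_diff hφ_deriv hC in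
lemma exists_fix (t : ℝ) : ∃ c : ℝ, FF P L φ t c = c := by
  have hC0 : 0 ≤ C := le_trans (abs_nonneg _) (hC 0)
  set h : ℝ → ℝ := fun c => FF P L φ t c - c with hh
  have hcont : ContinuousOn h (Set.Icc (-(C + 1)) (C + 1)) :=
    ((FF_continuous P L φ hL hφ_diff hφ_deriv hC t).sub continuous_id).continuousOn
  have hab : (-(C + 1) : ℝ) ≤ C + 1 := by linarith
  have hmem : (0 : ℝ) ∈ Set.Icc (h (C + 1)) (h (-(C + 1))) := by
    constructor
    · have := FF_bound P L φ hL hφ_diff hC t (C + 1)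
      simp only [hh]
      rw [abs_le] at this
      linarith [this.2]
    · have := FF_bound P L φ hL hφ_diff hC t (-(C + 1))
      simp only [hh]
      rw [abs_le] at this
      linarith [this.1]
  obtain ⟨c, _, hc⟩ := intermediate_value_Icc' hab hcont hmem
  exact ⟨c, by simp only [hh] at hc; linarith⟩

include hL hφ_diff hφ_deriv hC in
lemma fix_unique (t : ℝ) {c c' : ℝ} (h : FF P L φ t c = c) (h' : FF P L φ t c' = c') :
    c = c' := by
  rcases lt_trichotomy c c' with hlt | heq | hlt
  · have := FF_shrink P L φ hL hφ_diff hφ_deriv hC t hlt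
    rw [h, h'] at this; linarith
  · exact heq
  · have := FF_shrink P L φ hL hφ_diff hφ_deriv hC t hlt
    rw [h, h'] at this; linarith

/-- The deterministic mean-field shift function. -/
def GG (hL : Measurable L) (hφ_diff : Differentiable ℝ φ)
    (hφ_deriv : ∀ x : ℝ, deriv φ x ∈ Set.Ico (0 : ℝ) 1) (hC : ∀ x : ℝ, |φ x| ≤ C)
    (t : ℝ) : ℝ :=
  Classical.choose (exists_fix P L φ hL hφ_diff hφ_deriv hC t)

lemma GG_fix (t : ℝ) :
    FF P L φ t (GG P L φ hL hφ_diff hφ_deriv hC t) = GG P L φ hL hφ_diff hφ_deriv hC t :=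
  Classical.choose_spec (exists_fix P L φ hL hφ_diff hφ_deriv hC t)

lemma GG_eq_of_fix {t c : ℝ} (h : FF P L φ t c = c) :
    c = GG P L φ hL hφ_diff hφ_deriv hC t :=
  fix_unique P L φ hL hφ_diff hφ_deriv hC t h (GG_fix P L φ hL hφ_diff hφ_deriv hC t)

lemma GG_bound (t : ℝ) : |GG P L φ hL hφ_diff hφ_deriv hC t| ≤ C := by
  rw [← GG_fix P L φ hL hφ_diff hφ_deriv hC t]
  exact FF_bound P L φ hL hφ_diff hC t _

lemma GG_mono : ∀ ⦃s t : ℝ⦄, s ∈ Set.Ioo 0 T → t ∈ Set.Ioo 0 T → s ≤ t →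
    GG P L φ hL hφ_diff hφ_deriv hC s ≤ GG P L φ hL hφ_diff hφ_deriv hC t := by
  intro s t hs ht hst
  set a := GG P L φ hL hφ_diff hφ_deriv hC s with ha
  set b := GG P L φ hL hφ_diff hφ_deriv hC t with hb
  by_contra hcon
  push_neg at hcon
  have h1 : a - b = FF P L φ s a - FF P L φ t b := by
    rw [GG_fix P L φ hL hφ_diff hφ_deriv hC s, GG_fix P L φ hL hφ_diff hφ_deriv hC t]
  have h2 : FF P L φ s a ≤ FF P L φ t a := FF_mono_t P L φ hL hφ_diff hφ_deriv hC hs ht hst a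
  have h3 : FF P L φ t a - FF P L φ t b < a - b :=
    FF_shrink P L φ hL hφ_diff hφ_deriv hC t hcon
  linarith

lemma tendsto_psi_left (v : VPlus T) {t : ℝ} (ht : t ∈ Set.Ioo 0 T) :
    Filter.Tendsto (fun s => WithBot.unbotD 0 (v.toFun s)) (𝓝[<] t) (𝓝 (WithBot.unbotD 0 (v.toFun t))) := by
  rw [Metric.tendsto_nhds]
  intro ε hε
  set x : ℝ := WithBot.unbotD 0 (v.toFun t) with hx
  have hvt : v.toFun t = (x : WithBot ℝ) := coe_eval v ht
  obtain ⟨s₀, hs₀, hbs₀⟩ := exists_lt_near v ht (show ((x - ε / 2 : ℝ) : WithBot ℝ) < v.toFun t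
    by rw [hvt, WithBot.coe_lt_coe]; linarith)
  have hmem : Set.Ioo s₀ t ∈ 𝓝[<] t := Ioo_mem_nhdsLT_of_mem ⟨hs₀.2, le_refl t⟩
  filter_upwards [hmem] with s hs
  have hsT : s ∈ Set.Ioo 0 T := ⟨lt_trans hs₀.1 hs.1, lt_trans hs.2 ht.2⟩
  set y : ℝ := WithBot.unbotD 0 (v.toFun s) with hy
  have hvs : v.toFun s = (y : WithBot ℝ) := coe_eval v hsT
  have hylt : x - ε / 2 < y := by
    have h1 : v.toFun s₀ ≤ v.toFun s := v.mono hs₀.1.le hs.1.le hsT.2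
    have := lt_of_lt_of_le hbs₀ h1
    rwa [hvs, WithBot.coe_lt_coe] at this
  have hyle : y ≤ x := by
    have h1 : v.toFun s ≤ v.toFun t := v.mono hsT.1.le hs.2.le ht.2
    rwa [hvs, hvt, WithBot.coe_le_coe] at h1
  rw [Real.dist_eq, abs_lt]
  constructor <;> [linarith; linarith]

include hL hφ_diff hφ_deriv hC in
lemma GG_lub {t : ℝ} (ht : t ∈ Set.Ioo 0 T) :
    IsLUB (GG P L φ hL hφ_diff hφ_deriv hC '' Set.Ioo 0 t)
      (GG P L φ hL hφ_diff hφ_deriv hC t) := by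
  set g := GG P L φ hL hφ_diff hφ_deriv hC with hg
  have hne : (g '' Set.Ioo 0 t).Nonempty :=
    ⟨g (t / 2), ⟨t / 2, ⟨by linarith [ht.1], by linarith [ht.1]⟩, rfl⟩⟩
  have hbdd : BddAbove (g '' Set.Ioo 0 t) := by
    refine ⟨C, ?_⟩
    rintro y ⟨s, hs, rfl⟩
    exact (abs_le.mp (GG_bound P L φ hL hφ_diff hφ_deriv hC s)).2
  set u : ℝ := sSup (g '' Set.Ioo 0 t) with hu
  have hlub : IsLUB (g '' Set.Ioo 0 t) u := isLUB_csSup hne hbdd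
  -- g tends to u from the left
  have htend : Filter.Tendsto g (𝓝[<] t) (𝓝 u) := by
    rw [Metric.tendsto_nhds]
    intro ε hε
    obtain ⟨y, ⟨s₀, hs₀, rfl⟩, hy⟩ := exists_lt_of_lt_csSup hne (show u - ε < u by linarith)
    have hmem : Set.Ioo s₀ t ∈ 𝓝[<] t := Ioo_mem_nhdsLT_of_mem ⟨hs₀.2, le_refl t⟩
    filter_upwards [hmem] with s hs
    have hsIoo : s ∈ Set.Ioo 0 t := ⟨lt_trans hs₀.1 hs.1, hs.2⟩
    have hsT : s ∈ Set.Ioo 0 T := ⟨hsIoo.1, lt_trans hs.2 ht.2⟩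
    have h1 : g s₀ ≤ g s := GG_mono P L φ hL hφ_diff hφ_deriv hC
      ⟨hs₀.1, lt_trans hs₀.2 ht.2⟩ hsT hs.1.le
    have h2 : g s ≤ u := hlub.1 ⟨s, hsIoo, rfl⟩
    rw [Real.dist_eq, abs_lt]
    constructor <;> [linarith; linarith]
  -- FF · u tends to FF t u
  have htendF : Filter.Tendsto (fun s => FF P L φ s u) (𝓝[<] t) (𝓝 (FF P L φ t u)) := by
    apply tendsto_integral_filter_of_dominated_convergence (fun _ => C)
    · exact Filter.Eventually.of_forall fun s =>
        (hφ_diff.continuous.measurable.comp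
          (((measurable_eval s).comp hL).add_const u)).aestronglyMeasurable
    · exact Filter.Eventually.of_forall fun s => Filter.Eventually.of_forall fun ω => by
        rw [Real.norm_eq_abs]; exact hC _
    · exact integrable_const C
    · refine Filter.Eventually.of_forall fun ω => ?_
      have h1 := tendsto_psi_left (T := T) (L ω) ht
      have h2 : Filter.Tendsto (fun s => ψ L s ω + u) (𝓝[<] t) (𝓝 (ψ L t ω + u)) :=
        h1.add tendsto_const_nhds
      exact (hφ_diff.continuous.continuousAt.tendsto.comp h2 : _)
  -- FF s u is close to g s
  have hbound : ∀ᶠ s in 𝓝[<] t, ‖FF P L φ s u - g s‖ ≤ |g s - u| :=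
    Filter.Eventually.of_forall fun s => by
      have h1 : FF P L φ s u - g s = FF P L φ s u - FF P L φ s (g s) := by
        rw [GG_fix P L φ hL hφ_diff hφ_deriv hC s]
      rw [Real.norm_eq_abs, h1]
      have h3 := FF_lip P L φ hL hφ_diff hφ_deriv hC s u (g s)
      have h2 : |u - g s| = |g s - u| := abs_sub_comm _ _
      linarith [h3, h2.le]
  have htend0 : Filter.Tendsto (fun s => |g s - u|) (𝓝[<] t) (𝓝 0) := by
    have h4 : Filter.Tendsto (fun s => g s - u) (𝓝[<] t) (𝓝 (u - u)) :=
      htend.sub tendsto_const_nhds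
    rw [sub_self] at h4
    simpa using h4.abs
  have hdiff : Filter.Tendsto (fun s => FF P L φ s u - g s) (𝓝[<] t) (𝓝 0) :=
    squeeze_zero_norm' hbound htend0
  -- conclude FF t u = u
  have hfix : FF P L φ t u = u := by
    have h1 : Filter.Tendsto (fun s => FF P L φ s u) (𝓝[<] t) (𝓝 (0 + u)) := by
      have := hdiff.add htend
      convert this using 2 with s
      ring
    rw [zero_add] at h1
    exact tendsto_nhds_unique htendF h1
  have h5 := GG_eq_of_fix P L φ hL hφ_diff hφ_deriv hC hfix
  have hgt : g t = u := (congrFun hg t).trans h5.symm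
  rw [hgt]
  exact hlub


lemma VPlus.ext' {v w : VPlus T} (h : v.toFun = w.toFun) : v = w := by
  cases v; cases w; simpa using h

end Fix
end MFAux

/-- **Mean-field fixed point in the dimension-reduction setting (Theorem 2.10).**
There exists a unique Borel probability measure `m` on `(𝕍⁺, d_L)` that equals the
law of the `𝕍⁺`-valued random element `ω ↦ (t ↦ L(ω)(t) + m_t(φ))`, where
`m_t(φ) = ∫ φ(v(t)) m(dv)` for `t ∈ (0,T)` and the sum is `−∞` at `t = 0`
(the convention `(−∞) + c = −∞` is built into the addition of `WithBot ℝ`). -/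
theorem unique_mean_field_fixed_point
    (T : ℝ) (hT : 0 < T)
    {Ω : Type*} [MeasurableSpace Ω] (P : Measure Ω) [IsProbabilityMeasure P]
    (L : Ω → VPlus T) (hL : Measurable L)
    (φ : ℝ → ℝ) (hφ_diff : Differentiable ℝ φ)
    (hφ_deriv : ∀ x : ℝ, deriv φ x ∈ Set.Ico (0 : ℝ) 1)
    (hφ_bdd : ∃ C : ℝ, ∀ x : ℝ, |φ x| ≤ C) :
    ∃! m : Measure (VPlus T),
      IsProbabilityMeasure m ∧
      ∃ M : Ω → VPlus T, Measurable M ∧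
        (∀ ω : Ω, ∀ t ∈ Set.Ioo 0 T,
          (M ω).toFun t =
            (L ω).toFun t +
              ((∫ v, φ (WithBot.unbotD 0 ((v : VPlus T).toFun t)) ∂m : ℝ) : WithBot ℝ)) ∧
        m = P.map M := by
  classical
  obtain ⟨C, hC⟩ := hφ_bdd
  set g : ℝ → ℝ := MFAux.GG P L φ hL hφ_diff hφ_deriv hC with hgdef
  have hmono : ∀ ⦃s t : ℝ⦄, s ∈ Set.Ioo 0 T → t ∈ Set.Ioo 0 T → s ≤ t → g s ≤ g t :=
    MFAux.GG_mono P L φ hL hφ_diff hφ_deriv hC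
  have hlub : ∀ t ∈ Set.Ioo 0 T, IsLUB (g '' Set.Ioo 0 t) (g t) :=
    fun t ht => MFAux.GG_lub P L φ hL hφ_diff hφ_deriv hC ht
  set A : VPlus T → VPlus T := MFAux.shiftV g hmono hlub with hAdef
  have hAmeas : Measurable A := MFAux.measurable_shiftV g hmono hlub
  set M₀ : Ω → VPlus T := fun ω => A (L ω) with hM₀def
  have hM₀ : Measurable M₀ := hAmeas.comp hL
  have hM₀eval : ∀ ω t, (M₀ ω).toFun t = (L ω).toFun t + ((g t : ℝ) : WithBot ℝ) :=
    fun ω t => rfl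
  -- the integrand is measurable on VPlus
  have hsm : ∀ (μ : Measure (VPlus T)) (t : ℝ),
      AEStronglyMeasurable (fun v : VPlus T => φ (WithBot.unbotD 0 (VPlus.toFun v t))) μ :=
    fun μ t => (hφ_diff.continuous.measurable.comp (MFAux.measurable_eval t)).aestronglyMeasurable
  -- the key computation for any measurable N with the shift property
  have key : ∀ (N : Ω → VPlus T), Measurable N → ∀ (c : ℝ), ∀ t ∈ Set.Ioo 0 T,
      (∀ ω, (N ω).toFun t = (L ω).toFun t + ((c : ℝ) : WithBot ℝ)) →
      ∫ v, φ (WithBot.unbotD 0 (VPlus.toFun v t)) ∂(P.map N) = MFAux.FF P L φ t c := by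
    intro N hN c t ht hNt
    rw [integral_map hN.aemeasurable (hsm _ t)]
    have heq : ∀ ω, WithBot.unbotD 0 ((N ω).toFun t) = MFAux.ψ L t ω + c := by
      intro ω
      rw [hNt ω, MFAux.coe_eval (L ω) ht, ← WithBot.coe_add, WithBot.unbotD_coe]
      rfl
    simp only [heq]
    rfl
  have hint : ∀ t ∈ Set.Ioo 0 T,
      ∫ v, φ (WithBot.unbotD 0 (VPlus.toFun v t)) ∂(P.map M₀) = g t := by
    intro t ht
    rw [key M₀ hM₀ (g t) t ht (fun ω => hM₀eval ω t)]
    exact MFAux.GG_fix P L φ hL hφ_diff hφ_deriv hC t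
  refine ⟨P.map M₀, ⟨Measure.isProbabilityMeasure_map hM₀.aemeasurable, M₀, hM₀, ?_, rfl⟩, ?_⟩
  · intro ω t ht
    rw [hint t ht]
    exact hM₀eval ω t
  · rintro m ⟨hprob, M, hMmeas, hMeq, hmmap⟩
    -- the candidate shift function of m
    have hfix : ∀ t ∈ Set.Ioo 0 T,
        (∫ v, φ (WithBot.unbotD 0 (VPlus.toFun v t)) ∂m) = g t := by
      intro t ht
      set c : ℝ := ∫ v, φ (WithBot.unbotD 0 (VPlus.toFun v t)) ∂m with hcdef
      have h1 : ∫ v, φ (WithBot.unbotD 0 (VPlus.toFun v t)) ∂(P.map M) = MFAux.FF P L φ t c :=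
        key M hMmeas c t ht (fun ω => hMeq ω t ht)
      rw [← hmmap] at h1
      have h2 : MFAux.FF P L φ t c = c := h1.symm
      exact MFAux.GG_eq_of_fix P L φ hL hφ_diff hφ_deriv hC h2
    have hMM₀ : M = M₀ := by
      funext ω
      apply MFAux.VPlus.ext'
      funext t
      by_cases ht : t ∈ Set.Ioo 0 T
      · rw [hMeq ω t ht, hfix t ht, hM₀eval ω t]
      · rw [(M ω).bot ht, (M₀ ω).bot ht]
    rw [hmmap, hMM₀]


end
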